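/- If a right path from D_μ to D_λ exists, then the set of right paths from D_μ to D_λ contains a unique path of maximal length, namely the 'trivial path' which moves the i-th ∨ of D_μ to the position of the i-th ∨ of D_λ for every i. -/

import Mathlib

/-! ## Weight diagrams, cap diagrams and right paths (Brundan–Stroppel / Brundan),
as used in "A Weyl-type character formula for PDC modules of gl(m|n)". -/

/-- The symbols of a weight diagram: `∨`, `∧`, `×`, `∘`. -/
inductive Tag : Type
  | vee | wedge | ex | circ
  deriving DecidableEq

/-- A weight diagram: a function `ℤ → {∨,∧,×,∘}` with finitely many non-`∧` entries. -/
structure WDiag : Type where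
  D : ℤ → Tag
  finite : {t : ℤ | D t ≠ Tag.wedge}.Finite

namespace WDiag

/-- The (finite) set of positions of `∨`'s. -/
noncomputable def veeFinset (W : WDiag) : Finset ℤ :=
  W.finite.toFinset.filter (fun t => W.D t = Tag.vee)

/-- The position of the `i`-th `∨`, counted from the left starting with `i = 0`
(junk value if `i` is out of range). -/
noncomputable def nthVee (W : WDiag) (i : ℕ) : ℤ :=
  (W.veeFinset.sort (· ≤ ·)).getD i 0

/-- In the open interval `(p,q)` there are as many `∨`'s as `∧`'s. -/
def capBal (W : WDiag) (p q : ℤ) : Prop :=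
  ((Finset.Ioo p q).filter (fun t => W.D t = Tag.vee)).card =
    ((Finset.Ioo p q).filter (fun t => W.D t = Tag.wedge)).card

/-- `(p,q)` is a cap of the cap diagram of `W`: `p` carries `∨`, `q` is the first `∧` to the
right of `p` such that the `∨`'s and `∧`'s strictly between `p` and `q` pair off.  This
balance condition characterizes the matching obtained by processing the `∨`'s right to left,
joining each `∨` to the first unmarked `∧` to its right. -/
def IsCap (W : WDiag) (p q : ℤ) : Prop :=
  W.D p = Tag.vee ∧ W.D q = Tag.wedge ∧ p < q ∧ W.capBal p q ∧
    ∀ q', p < q' → q' < q → W.D q' = Tag.wedge → ¬ W.capBal p q'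

/-- Cap `(p,q)` is nested (strictly) below cap `(p',q')`. -/
def CapBelow (p q p' q' : ℤ) : Prop := p' < p ∧ q < q'

/-- The diagram obtained by exchanging the `∨` at `p` with the `∧` at `q`. -/
noncomputable def moveDiag (W : WDiag) (p q : ℤ) : WDiag where
  D := fun t => if t = p then Tag.wedge else if t = q then Tag.vee else W.D t
  finite := by
    classical
    refine Set.Finite.subset (W.finite.union (Set.toFinite {p, q})) ?_
    intro t ht
    by_cases h1 : t = p
    · exact Or.inr (by simp [h1])
    · by_cases h2 : t = q
      · exact Or.inr (by simp [h2])
      · left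
        simpa [Set.mem_setOf_eq, h1, h2] using ht

/-- The right move `R_i` (as a relation): exchange the `i`-th `∨` (counted from the left,
`0`-based) with the `∧` to which it is joined by a cap. -/
def RMove (i : ℕ) (W W' : WDiag) : Prop :=
  i < W.veeFinset.card ∧ ∃ q, W.IsCap (W.nthVee i) q ∧ W' = W.moveDiag (W.nthVee i) q

/-- `PathRel l W W'`: applying the right moves recorded in `l` (head first) turns `W`
into `W'`. -/
def PathRel : List ℕ → WDiag → WDiag → Prop
  | [], W, W' => W = W'
  | i :: l, W, W' => ∃ E, RMove i W E ∧ PathRel l E W'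

/-- `l` is a right path from `W` to `W'`: a sequence of right moves
`R_{i₁} ∘ ⋯ ∘ R_{i_k}` with `i₁ ≤ … ≤ i_k`.  Since the composition is applied rightmost
factor first, the list of moves in order of application is weakly decreasing. -/
def IsRightPath (W W' : WDiag) (l : List ℕ) : Prop :=
  l.Chain' (fun a b => b ≤ a) ∧ PathRel l W W'

/-- `W` and `W'` have the same typical entries (`×`'s and `∘`'s). -/
def SameTypical (W W' : WDiag) : Prop :=
  ∀ t, (W.D t = Tag.ex ↔ W'.D t = Tag.ex) ∧ (W.D t = Tag.circ ↔ W'.D t = Tag.circ)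

/-- Totally connected: between any two `∨`'s there is no `∧`. -/
def TC (W : WDiag) : Prop :=
  ∀ p q t, W.D p = Tag.vee → W.D q = Tag.vee → p < t → t < q → W.D t ≠ Tag.wedge

/-- Totally disconnected: between any two `∨`'s there is at least one `∧`. -/
def TDC (W : WDiag) : Prop :=
  ∀ p q, W.D p = Tag.vee → W.D q = Tag.vee → p < q → ∃ t, p < t ∧ t < q ∧ W.D t = Tag.wedge

/-- `[a,b]` is an atypical component: a maximal nonempty interval containing a `∨` and
no `∧` (maximality amounts to `∧`'s at the two positions just outside). -/
def IsComp (W : WDiag) (a b : ℤ) : Prop :=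
  a ≤ b ∧ (∀ t ∈ Finset.Icc a b, W.D t ≠ Tag.wedge) ∧ (∃ t ∈ Finset.Icc a b, W.D t = Tag.vee)
    ∧ W.D (a - 1) = Tag.wedge ∧ W.D (b + 1) = Tag.wedge

/-- Piecewise disconnected (PDC): for any two consecutive atypical components `T_i = [a,b]`,
`T_{i+1} = [a',b']` (no atypical component strictly between them), the number `t_i` of `∨`'s
in `T_i` is at most the number `s_i` of `∧`'s strictly between `T_i` and `T_{i+1}`. -/
def PDC (W : WDiag) : Prop :=
  ∀ a b a' b', W.IsComp a b → W.IsComp a' b' → b < a' →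
    (∀ a'' b'', W.IsComp a'' b'' → ¬(b < a'' ∧ b'' < a')) →
    ((Finset.Icc a b).filter (fun t => W.D t = Tag.vee)).card ≤
      ((Finset.Ioo b a').filter (fun t => W.D t = Tag.wedge)).card

/-- Positions `x` and `y` lie in the same atypical component: no `∧` in between
(inclusively). -/
def SameComp (W : WDiag) (x y : ℤ) : Prop :=
  ∀ t ∈ Finset.Icc (min x y) (max x y), W.D t ≠ Tag.wedge

/-- A labeled right move on a diagram with `r` labeled `∨`'s (the function `Fin r → ℤ`
records the current position of each labeled `∨`): the move `R_i` moves the label currently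
occupying the position of the `i`-th `∨`. -/
def LMove (r : ℕ) (i : ℕ) (S S' : WDiag × (Fin r → ℤ)) : Prop :=
  ∃ (k : Fin r) (q : ℤ), S.2 k = S.1.nthVee i ∧ i < S.1.veeFinset.card ∧
    S.1.IsCap (S.2 k) q ∧ S'.1 = S.1.moveDiag (S.2 k) q ∧ S'.2 = Function.update S.2 k q

/-- Labeled version of `PathRel`. -/
def LPathRel (r : ℕ) : List ℕ → WDiag × (Fin r → ℤ) → WDiag × (Fin r → ℤ) → Prop
  | [], S, S' => S = S'
  | i :: l, S, S' => ∃ E, LMove r i S E ∧ LPathRel r l E S'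

/-- The path `l` from `Wmu` to `Wlam` induces the permutation `σ ∈ Tag(r)`: labeling the `∨`'s
of `Wmu` left to right by `0, …, r−1` and following them along the path, the `k`-th `∨` of
`Wmu` ends at the position of the `σ(k)`-th `∨` of `Wlam`. -/
def Induces (r : ℕ) (Wmu Wlam : WDiag) (l : List ℕ) (σ : Equiv.Perm (Fin r)) : Prop :=
  ∃ f : Fin r → ℤ, LPathRel r l (Wmu, fun k => Wmu.nthVee k) (Wlam, f) ∧
    ∀ k : Fin r, f k = Wlam.nthVee (σ k)

end WDiag

/-- The weight diagram of a strictly dominant integral weight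
`λ^ρ = Σ a_i ε_i − Σ b_j δ_j` of `gl(m|n)`:  put `∨` at `t` if `t ∈ {a_i} ∩ {b_j}`,
`×` if `t ∈ {a_i} ∖ {b_j}`, `∘` if `t ∈ {b_j} ∖ {a_i}`, and `∧` otherwise. -/
noncomputable def wdOf {m n : ℕ} (a : Fin m → ℤ) (b : Fin n → ℤ) : WDiag := by
  classical
  refine ⟨fun t => if ∃ i, a i = t then (if ∃ j, b j = t then Tag.vee else Tag.ex)
      else (if ∃ j, b j = t then Tag.circ else Tag.wedge), ?_⟩
  refine Set.Finite.subset ((Set.finite_range a).union (Set.finite_range b)) ?_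
  intro t ht
  by_cases hA : ∃ i, a i = t
  · exact Or.inl (by obtain ⟨i, hi⟩ := hA; exact ⟨i, hi⟩)
  · by_cases hB : ∃ j, b j = t
    · exact Or.inr (by obtain ⟨j, hj⟩ := hB; exact ⟨j, hj⟩)
    · exact absurd (by simp [Set.mem_setOf_eq, hA, hB]) ht

namespace RPAux
open WDiag

attribute [local instance 10] Classical.propDecidable

lemma mem_veeFinset {W : WDiag} {t : ℤ} : t ∈ W.veeFinset ↔ W.D t = Tag.vee := by
  simp only [veeFinset, Finset.mem_filter, Set.Finite.mem_toFinset, Set.mem_setOf_eq]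
  exact ⟨fun h => h.2, fun h => ⟨by simp [h], h⟩⟩

/-- `t` is a typical position (`×` or `∘`). -/
def typ (W : WDiag) (t : ℤ) : Prop := W.D t = Tag.ex ∨ W.D t = Tag.circ

lemma tag_cases (W : WDiag) (t : ℤ) :
    W.D t = Tag.vee ∨ W.D t = Tag.wedge ∨ typ W t := by
  cases h : W.D t <;> simp [typ, h]

lemma wdiag_ext {W W' : WDiag} (h : ∀ t, W.D t = W'.D t) : W = W' := by
  cases W; cases W'
  simp only [WDiag.mk.injEq]
  exact funext h

/-- Key computation tool: if `g` enumerates `s` strictly monotonically then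
the sort of `s` is `ofFn g`. -/
lemma sort_eq_ofFn {s : Finset ℤ} {r : ℕ} (g : Fin r → ℤ)
    (mono : ∀ i j : Fin r, i < j → g i < g j)
    (img : ∀ t, t ∈ s ↔ ∃ i : Fin r, g i = t) :
    s.sort (· ≤ ·) = List.ofFn g := by
  apply List.Perm.eq_of_pairwise' (r := (· ≤ ·)) (Finset.pairwise_sort _ _) ?_ ?_
  · rw [List.pairwise_ofFn]
    intro i j hij
    exact (mono i j hij).le
  · apply List.perm_of_nodup_nodup_toFinset_eq (Finset.sort_nodup _ _)
    · rw [List.nodup_ofFn]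
      intro i j hg
      by_contra hne
      rcases lt_or_gt_of_ne hne with h | h
      · exact absurd hg (ne_of_lt (mono _ _ h))
      · exact absurd hg.symm (ne_of_lt (mono _ _ h))
    · rw [Finset.sort_toFinset]
      ext t
      rw [List.mem_toFinset, List.mem_ofFn]
      exact (img t).trans (by exact Iff.rfl)

lemma nthVee_of_ofFn {W : WDiag} {r : ℕ} (g : Fin r → ℤ)
    (h : W.veeFinset.sort (· ≤ ·) = List.ofFn g) (i : Fin r) :
    W.nthVee i = g i := by
  rw [nthVee, h, List.getD_eq_getElem _ _ (by simp [i.isLt]), List.getElem_ofFn]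

lemma length_sort_vees (W : WDiag) :
    (W.veeFinset.sort (· ≤ ·)).length = W.veeFinset.card :=
  Finset.length_sort _

lemma nthVee_mem {W : WDiag} {i : ℕ} (hi : i < W.veeFinset.card) :
    W.nthVee i ∈ W.veeFinset := by
  rw [nthVee, List.getD_eq_getElem _ _ (by rw [length_sort_vees]; exact hi)]
  have := List.getElem_mem (l := W.veeFinset.sort (· ≤ ·))
    (n := i) (h := by rw [length_sort_vees]; exact hi)
  exact (Finset.mem_sort _).mp this

lemma nthVee_vee {W : WDiag} {i : ℕ} (hi : i < W.veeFinset.card) :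
    W.D (W.nthVee i) = Tag.vee := mem_veeFinset.mp (nthVee_mem hi)

lemma nthVee_strictMono {W : WDiag} {i j : ℕ} (hij : i < j) (hj : j < W.veeFinset.card) :
    W.nthVee i < W.nthVee j := by
  have hlen := length_sort_vees W
  have hi' : i < (W.veeFinset.sort (· ≤ ·)).length := by omega
  have hj' : j < (W.veeFinset.sort (· ≤ ·)).length := by omega
  rw [nthVee, nthVee, List.getD_eq_getElem _ _ hi', List.getD_eq_getElem _ _ hj']
  have := ((Finset.sortedLT_sort W.veeFinset).getElem_lt_getElem_iff
    (hi := hi') (hj := hj')).mpr hij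
  simpa [List.get_eq_getElem] using this

lemma exists_nthVee_eq {W : WDiag} {t : ℤ} (ht : t ∈ W.veeFinset) :
    ∃ i, i < W.veeFinset.card ∧ W.nthVee i = t := by
  have hmem : t ∈ W.veeFinset.sort (· ≤ ·) := (Finset.mem_sort _).mpr ht
  obtain ⟨i, hi, hg⟩ := List.getElem_of_mem hmem
  exact ⟨i, by rw [← length_sort_vees]; exact hi,
    by rw [nthVee, List.getD_eq_getElem _ _ hi, hg]⟩

/-- The canonical enumeration: sort equals `ofFn` of `nthVee`. -/
lemma sort_eq_ofFn_nthVee (W : WDiag) {r : ℕ} (hr : W.veeFinset.card = r) :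
    W.veeFinset.sort (· ≤ ·) = List.ofFn (fun i : Fin r => W.nthVee i) := by
  apply List.ext_getElem (by simp [length_sort_vees, hr])
  intro i h1 h2
  rw [List.getElem_ofFn]
  rw [nthVee, List.getD_eq_getElem _ _ h1]

/-! ### Counting, caps -/

noncomputable def Vcnt (W : WDiag) (p q : ℤ) : ℕ :=
  ((Finset.Ioo p q).filter (fun t => W.D t = Tag.vee)).card

noncomputable def Wcnt (W : WDiag) (p q : ℤ) : ℕ :=
  ((Finset.Ioo p q).filter (fun t => W.D t = Tag.wedge)).card

lemma capBal_iff {W : WDiag} {p q : ℤ} : W.capBal p q ↔ Vcnt W p q = Wcnt W p q := by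
  rw [capBal, Vcnt, Wcnt]

lemma Vcnt_mono (W : WDiag) {p q q' : ℤ} (h : q ≤ q') : Vcnt W p q ≤ Vcnt W p q' :=
  Finset.card_le_card (Finset.filter_subset_filter _ (Finset.Ioo_subset_Ioo le_rfl h))

lemma exists_cap {W : WDiag} {p : ℤ} (hp : W.D p = Tag.vee) : ∃ q, W.IsCap p q := by
  classical
  set S := W.finite.toFinset with hS
  have hpS : p ∈ S := by
    rw [hS, Set.Finite.mem_toFinset]; simp [hp]
  set B := S.max' ⟨p, hpS⟩ with hB
  have hpB : p ≤ B := S.le_max' p hpS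
  set M := B + (S.card : ℤ) + 1 with hM
  have hBM : B < M := by rw [hM]; omega
  have wedge_of_gt : ∀ t : ℤ, B < t → W.D t = Tag.wedge := by
    intro t ht
    by_contra hw
    have : t ∈ S := by rw [hS, Set.Finite.mem_toFinset]; exact hw
    exact absurd (S.le_max' t this) (by omega)
  have hpM : p < M := lt_of_le_of_lt hpB hBM
  set A := (Finset.Ioc p M).filter
    (fun q => W.D q = Tag.wedge ∧ Vcnt W p q ≤ Wcnt W p q) with hA
  have hMA : M ∈ A := by
    rw [hA, Finset.mem_filter]
    refine ⟨Finset.mem_Ioc.mpr ⟨hpM, le_rfl⟩, wedge_of_gt M hBM, ?_⟩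
    have h1 : Vcnt W p M ≤ S.card := by
      apply Finset.card_le_card
      intro t ht
      rw [Finset.mem_filter] at ht
      rw [hS, Set.Finite.mem_toFinset]
      simp [ht.2]
    have h2 : Finset.Ioo B M ⊆ (Finset.Ioo p M).filter (fun t => W.D t = Tag.wedge) := by
      intro t ht
      rw [Finset.mem_Ioo] at ht
      rw [Finset.mem_filter, Finset.mem_Ioo]
      exact ⟨⟨lt_of_le_of_lt hpB ht.1, ht.2⟩, wedge_of_gt t ht.1⟩
    have h3 : (Finset.Ioo B M).card = S.card := by
      rw [Int.card_Ioo, hM]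
      omega
    calc Vcnt W p M ≤ S.card := h1
      _ = (Finset.Ioo B M).card := h3.symm
      _ ≤ Wcnt W p M := Finset.card_le_card h2
  have hAne : A.Nonempty := ⟨M, hMA⟩
  set q0 := A.min' hAne with hq0
  have hq0A : q0 ∈ A := A.min'_mem hAne
  rw [hA, Finset.mem_filter, Finset.mem_Ioc] at hq0A
  obtain ⟨⟨hpq0, hq0M⟩, hq0w, hq0le⟩ := hq0A
  have hbal : Vcnt W p q0 = Wcnt W p q0 := by
    by_contra hne
    have hlt : Vcnt W p q0 < Wcnt W p q0 := lt_of_le_of_ne hq0le hne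
    have hFne : ((Finset.Ioo p q0).filter (fun t => W.D t = Tag.wedge)).Nonempty := by
      rw [← Finset.card_pos]; exact lt_of_le_of_lt (Nat.zero_le _) hlt
    obtain ⟨w, hwdef⟩ : ∃ w, ((Finset.Ioo p q0).filter
        (fun t => W.D t = Tag.wedge)).max' hFne = w := ⟨_, rfl⟩
    have hwmem := Finset.max'_mem _ hFne
    rw [hwdef, Finset.mem_filter, Finset.mem_Ioo] at hwmem
    obtain ⟨⟨hpw, hwq0⟩, hww⟩ := hwmem
    have hsplit : (Finset.Ioo p q0).filter (fun t => W.D t = Tag.wedge) =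
        insert w ((Finset.Ioo p w).filter (fun t => W.D t = Tag.wedge)) := by
      ext t
      simp only [Finset.mem_insert, Finset.mem_filter, Finset.mem_Ioo]
      constructor
      · rintro ⟨⟨h1, h2⟩, h3⟩
        have htF : t ∈ (Finset.Ioo p q0).filter (fun t => W.D t = Tag.wedge) := by
          simp only [Finset.mem_filter, Finset.mem_Ioo]; exact ⟨⟨h1, h2⟩, h3⟩
        have hle := Finset.le_max' _ t htF
        rw [hwdef] at hle
        rcases eq_or_lt_of_le hle with h | h
        · exact Or.inl h
        · exact Or.inr ⟨⟨h1, h⟩, h3⟩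
      · rintro (rfl | ⟨⟨h1, h2⟩, h3⟩)
        · exact ⟨⟨hpw, hwq0⟩, hww⟩
        · exact ⟨⟨h1, h2.trans hwq0⟩, h3⟩
    have hcard : Wcnt W p q0 = Wcnt W p w + 1 := by
      rw [Wcnt, Wcnt, hsplit, Finset.card_insert_of_notMem]
      intro hmem
      rw [Finset.mem_filter, Finset.mem_Ioo] at hmem
      exact absurd hmem.1.2 (lt_irrefl w)
    have hwA : w ∈ A := by
      rw [hA, Finset.mem_filter, Finset.mem_Ioc]
      refine ⟨⟨hpw, le_trans hwq0.le hq0M⟩, hww, ?_⟩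
      have hvm : Vcnt W p w ≤ Vcnt W p q0 := Vcnt_mono W hwq0.le
      omega
    exact absurd (A.min'_le w hwA) (by rw [← hq0]; omega)
  refine ⟨q0, hp, hq0w, hpq0, capBal_iff.mpr hbal, ?_⟩
  intro q' h1 h2 h3 hbal'
  have : q' ∈ A := by
    rw [hA, Finset.mem_filter, Finset.mem_Ioc]
    exact ⟨⟨h1, le_trans h2.le hq0M⟩, h3, le_of_eq (capBal_iff.mp hbal')⟩
  exact absurd (A.min'_le q' this) (by rw [← hq0]; omega)

lemma cap_unique {W : WDiag} {p q1 q2 : ℤ} (h1 : W.IsCap p q1) (h2 : W.IsCap p q2) :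
    q1 = q2 := by
  rcases lt_trichotomy q1 q2 with h | h | h
  · exact absurd h1.2.2.2.1 (h2.2.2.2.2 q1 h1.2.2.1 h h1.2.1)
  · exact h
  · exact absurd h2.2.2.2.1 (h1.2.2.2.2 q2 h2.2.2.1 h h2.2.1)

/-! ### moveDiag bookkeeping -/

lemma moveDiag_D (W : WDiag) (p q t : ℤ) :
    (W.moveDiag p q).D t =
      if t = p then Tag.wedge else if t = q then Tag.vee else W.D t := rfl

lemma veeFinset_moveDiag {W : WDiag} {p q : ℤ} (hp : W.D p = Tag.vee)
    (hq : W.D q = Tag.wedge) :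
    (W.moveDiag p q).veeFinset = insert q (W.veeFinset.erase p) := by
  have hpq : p ≠ q := fun h => by rw [h, hq] at hp; exact Tag.noConfusion hp
  ext t
  rw [mem_veeFinset, Finset.mem_insert, Finset.mem_erase, mem_veeFinset, moveDiag_D]
  by_cases h1 : t = p
  · subst h1; simp [hpq]
  · by_cases h2 : t = q
    · subst h2; simp [h1]
    · simp [h1, h2]

lemma card_veeFinset_moveDiag {W : WDiag} {p q : ℤ} (hp : W.D p = Tag.vee)
    (hq : W.D q = Tag.wedge) :
    (W.moveDiag p q).veeFinset.card = W.veeFinset.card := by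
  rw [veeFinset_moveDiag hp hq]
  have hqs : q ∉ W.veeFinset := fun h => by
    rw [mem_veeFinset, hq] at h; exact Tag.noConfusion h
  have hps : p ∈ W.veeFinset := mem_veeFinset.mpr hp
  rw [Finset.card_insert_of_notMem (fun h => hqs (Finset.mem_of_mem_erase h)),
    Finset.card_erase_of_mem hps]
  have : 0 < W.veeFinset.card := Finset.card_pos.mpr ⟨p, hps⟩
  omega

/-! ### Typical positions and the potential function -/

noncomputable def typFinset (W : WDiag) : Finset ℤ :=
  W.finite.toFinset.filter (fun t => typ W t)

lemma typ_ne_wedge {W : WDiag} {t : ℤ} (h : typ W t) : W.D t ≠ Tag.wedge := by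
  rcases h with h | h <;> rw [h] <;> exact fun hc => Tag.noConfusion hc

lemma mem_typFinset {W : WDiag} {t : ℤ} : t ∈ typFinset W ↔ typ W t := by
  rw [typFinset, Finset.mem_filter, Set.Finite.mem_toFinset]
  exact ⟨fun h => h.2, fun h => ⟨typ_ne_wedge h, h⟩⟩

lemma typ_moveDiag {W : WDiag} {p q : ℤ} (hp : W.D p = Tag.vee)
    (hq : W.D q = Tag.wedge) (t : ℤ) : typ (W.moveDiag p q) t ↔ typ W t := by
  rw [typ, typ, moveDiag_D]
  by_cases h1 : t = p
  · subst h1; simp [hp]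
  · by_cases h2 : t = q
    · subst h2; simp [h1, hq]
    · simp [h1, h2]

lemma typFinset_moveDiag {W : WDiag} {p q : ℤ} (hp : W.D p = Tag.vee)
    (hq : W.D q = Tag.wedge) : typFinset (W.moveDiag p q) = typFinset W := by
  ext t; rw [mem_typFinset, mem_typFinset, typ_moveDiag hp hq]

lemma sameTypical_moveDiag {W : WDiag} {p q : ℤ} (hp : W.D p = Tag.vee)
    (hq : W.D q = Tag.wedge) : SameTypical W (W.moveDiag p q) := by
  intro t
  rw [moveDiag_D]
  by_cases h1 : t = p
  · subst h1
    simp only [if_pos rfl, hp]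
    exact ⟨⟨fun h => Tag.noConfusion h, fun h => Tag.noConfusion h⟩,
      ⟨fun h => Tag.noConfusion h, fun h => Tag.noConfusion h⟩⟩
  · by_cases h2 : t = q
    · subst h2
      simp only [if_neg h1, if_pos rfl, hq]
      exact ⟨⟨fun h => Tag.noConfusion h, fun h => Tag.noConfusion h⟩,
        ⟨fun h => Tag.noConfusion h, fun h => Tag.noConfusion h⟩⟩
    · simp [h1, h2]

noncomputable def tau (W : WDiag) (v : ℤ) : ℤ :=
  (((typFinset W).filter (fun t => v < t)).card : ℤ)

noncomputable def phi (W : WDiag) : ℤ := ∑ v ∈ W.veeFinset, (v + tau W v)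

lemma tau_eq_of_typFinset_eq {W W' : WDiag} (h : typFinset W = typFinset W') :
    tau W = tau W' := by
  funext v; rw [tau, tau, h]

lemma tau_sub {W : WDiag} {p q : ℤ} (hpq : p < q) (hq : W.D q = Tag.wedge) :
    tau W p = tau W q + (((Finset.Ioo p q).filter (fun t => typ W t)).card : ℤ) := by
  rw [tau, tau]
  have hsplit : (typFinset W).filter (fun t => p < t) =
      ((typFinset W).filter (fun t => q < t)) ∪
        ((Finset.Ioo p q).filter (fun t => typ W t)) := by
    ext t
    simp only [Finset.mem_union, Finset.mem_filter, Finset.mem_Ioo, mem_typFinset]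
    constructor
    · rintro ⟨ht, hpt⟩
      rcases lt_trichotomy q t with h | h | h
      · exact Or.inl ⟨ht, h⟩
      · exact absurd hq (by subst h; exact typ_ne_wedge ht)
      · exact Or.inr ⟨⟨hpt, h⟩, ht⟩
    · rintro (⟨ht, hqt⟩ | ⟨⟨h1, h2⟩, h3⟩)
      · exact ⟨ht, hpq.trans hqt⟩
      · exact ⟨h3, h1⟩
  rw [hsplit, Finset.card_union_of_disjoint]
  · push_cast; ring
  · rw [Finset.disjoint_left]
    intro t h1 h2
    rw [Finset.mem_filter] at h1
    rw [Finset.mem_filter, Finset.mem_Ioo] at h2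
    exact absurd h1.2 (not_lt.mpr h2.1.2.le)

lemma Ioo_card_split {W : WDiag} (p q : ℤ) :
    (Finset.Ioo p q).card = Vcnt W p q + Wcnt W p q +
      ((Finset.Ioo p q).filter (fun t => typ W t)).card := by
  classical
  rw [Vcnt, Wcnt]
  have h1 : Finset.Ioo p q = ((Finset.Ioo p q).filter (fun t => W.D t = Tag.vee)) ∪
      (((Finset.Ioo p q).filter (fun t => W.D t = Tag.wedge)) ∪
        ((Finset.Ioo p q).filter (fun t => typ W t))) := by
    ext t
    simp only [Finset.mem_union, Finset.mem_filter]
    constructor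
    · intro ht
      rcases tag_cases W t with h | h | h
      · exact Or.inl ⟨ht, h⟩
      · exact Or.inr (Or.inl ⟨ht, h⟩)
      · exact Or.inr (Or.inr ⟨ht, h⟩)
    · rintro (⟨ht, -⟩ | ⟨ht, -⟩ | ⟨ht, -⟩) <;> exact ht
  have hd1 : Disjoint ((Finset.Ioo p q).filter (fun t => W.D t = Tag.wedge))
      ((Finset.Ioo p q).filter (fun t => typ W t)) := by
    rw [Finset.disjoint_left]
    intro t ha hb
    rw [Finset.mem_filter] at ha hb
    exact typ_ne_wedge hb.2 ha.2
  have hd2 : Disjoint ((Finset.Ioo p q).filter (fun t => W.D t = Tag.vee))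
      (((Finset.Ioo p q).filter (fun t => W.D t = Tag.wedge)) ∪
        ((Finset.Ioo p q).filter (fun t => typ W t))) := by
    rw [Finset.disjoint_left]
    intro t ha hb
    rw [Finset.mem_union, Finset.mem_filter, Finset.mem_filter] at hb
    rw [Finset.mem_filter] at ha
    rcases hb with hb | hb
    · rw [ha.2] at hb; exact Tag.noConfusion hb.2
    · rcases hb.2 with h | h <;> rw [ha.2] at h <;> exact Tag.noConfusion h
  conv_lhs => rw [h1]
  rw [Finset.card_union_of_disjoint hd2, Finset.card_union_of_disjoint hd1]
  ring

lemma phi_moveDiag {W : WDiag} {p q : ℤ} (hcap : W.IsCap p q) :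
    phi (W.moveDiag p q) = phi W + 1 + 2 * (Vcnt W p q : ℤ) := by
  obtain ⟨hp, hq, hpq, hbal, -⟩ := hcap
  have hps : p ∈ W.veeFinset := mem_veeFinset.mpr hp
  have hqs : q ∉ W.veeFinset := fun h => by
    rw [mem_veeFinset, hq] at h; exact Tag.noConfusion h
  have htau : tau (W.moveDiag p q) = tau W :=
    tau_eq_of_typFinset_eq (by rw [typFinset_moveDiag hp hq])
  rw [phi, veeFinset_moveDiag hp hq, htau,
    Finset.sum_insert (fun h => hqs (Finset.mem_of_mem_erase h))]
  have hphiW : ∑ x ∈ W.veeFinset.erase p, (x + tau W x) + (p + tau W p) = phi W :=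
    Finset.sum_erase_add _ _ hps
  have hts := tau_sub hpq hq
  have hioo : ((Finset.Ioo p q).card : ℤ) = q - p - 1 := by
    rw [Int.card_Ioo]
    rw [Int.toNat_of_nonneg (by omega)]
  have hsplit := Ioo_card_split (W := W) p q
  have hbal' := capBal_iff.mp hbal
  have : (q + tau W q) - (p + tau W p) = 1 + 2 * (Vcnt W p q : ℤ) := by
    rw [hts]
    have : (q : ℤ) - p - 1 = (Vcnt W p q : ℤ) + (Wcnt W p q : ℤ) +
        (((Finset.Ioo p q).filter (fun t => typ W t)).card : ℤ) := by
      rw [← hioo, hsplit]; push_cast; ring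
    omega
  linarith [hphiW, this]

/-! ### The replacement lemma for simple moves -/

lemma nthVee_moveDiag_simple {W : WDiag} {r i : ℕ} (hr : W.veeFinset.card = r)
    (hi : i < r) {q : ℤ} (hcap : W.IsCap (W.nthVee i) q)
    (hsimple : Vcnt W (W.nthVee i) q = 0) {j : ℕ} (hj : j < r) :
    (W.moveDiag (W.nthVee i) q).nthVee j = if j = i then q else W.nthVee j := by
  obtain ⟨hp, hq, hpq, -, -⟩ := hcap
  have hr' : (W.moveDiag (W.nthVee i) q).veeFinset.card = r := by
    rw [card_veeFinset_moveDiag hp hq, hr]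
  set g : Fin r → ℤ := fun j => if (j : ℕ) = i then q else W.nthVee j with hg
  have hnotin : ∀ t, W.D t = Tag.vee → W.nthVee i < t → q < t := by
    intro t ht hlt
    rcases lt_trichotomy t q with h | h | h
    · exfalso
      have : t ∈ (Finset.Ioo (W.nthVee i) q).filter (fun t => W.D t = Tag.vee) := by
        rw [Finset.mem_filter, Finset.mem_Ioo]; exact ⟨⟨hlt, h⟩, ht⟩
      have := Finset.card_pos.mpr ⟨t, this⟩
      rw [Vcnt] at hsimple; omega
    · exfalso; rw [h, hq] at ht; exact Tag.noConfusion ht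
    · exact h
  have hmono : ∀ a b : Fin r, a < b → g a < g b := by
    intro a b hab
    rw [hg]
    simp only
    by_cases ha : (a : ℕ) = i
    · have hb : (b : ℕ) ≠ i := by omega
      rw [if_pos ha, if_neg hb]
      refine hnotin _ (nthVee_vee (by omega)) ?_
      exact nthVee_strictMono (by omega) (by omega)
    · by_cases hb : (b : ℕ) = i
      · rw [if_neg ha, if_pos hb]
        refine lt_trans (nthVee_strictMono (W := W) (i := (a : ℕ)) (j := i)
          (by omega) (by omega)) hpq
      · rw [if_neg ha, if_neg hb]
        exact nthVee_strictMono hab (by omega)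
  have himg : ∀ t, t ∈ (W.moveDiag (W.nthVee i) q).veeFinset ↔ ∃ a : Fin r, g a = t := by
    intro t
    rw [veeFinset_moveDiag hp hq, Finset.mem_insert, Finset.mem_erase, mem_veeFinset]
    constructor
    · rintro (rfl | ⟨hne, ht⟩)
      · exact ⟨⟨i, hi⟩, by simp [hg]⟩
      · obtain ⟨a, ha, hav⟩ := exists_nthVee_eq (mem_veeFinset.mpr ht)
        have ha' : a < r := by omega
        refine ⟨⟨a, ha'⟩, ?_⟩
        rw [hg]
        simp only
        rw [if_neg ?_, hav]
        intro h
        exact hne (by rw [← hav, h])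
    · rintro ⟨a, rfl⟩
      rw [hg]
      simp only
      by_cases ha : (a : ℕ) = i
      · rw [if_pos ha]; exact Or.inl rfl
      · rw [if_neg ha]
        refine Or.inr ⟨?_, nthVee_vee (by omega)⟩
        intro h
        rcases lt_trichotomy (a : ℕ) i with hlt | heq | hgt
        · exact absurd h (ne_of_lt (nthVee_strictMono hlt (by omega)))
        · exact ha heq
        · exact absurd h.symm (ne_of_lt (nthVee_strictMono hgt (by omega)))
  have hsort := sort_eq_ofFn (s := (W.moveDiag (W.nthVee i) q).veeFinset) g hmono himg
  have := nthVee_of_ofFn g hsort ⟨j, hj⟩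
  rw [this, hg]

/-! ### Dominance for general moves -/

lemma sort_getD_mem {s : Finset ℤ} {k : ℕ} (hk : k < s.card) :
    (s.sort (· ≤ ·)).getD k 0 ∈ s := by
  have hk' : k < (s.sort (· ≤ ·)).length := by rw [Finset.length_sort]; exact hk
  rw [List.getD_eq_getElem _ _ hk']
  exact (Finset.mem_sort _).mp (List.getElem_mem _)

lemma sort_getD_lt {s : Finset ℤ} {k l : ℕ} (hkl : k < l) (hl : l < s.card) :
    (s.sort (· ≤ ·)).getD k 0 < (s.sort (· ≤ ·)).getD l 0 := by
  have hl' : l < (s.sort (· ≤ ·)).length := by rw [Finset.length_sort]; exact hl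
  have hk' : k < (s.sort (· ≤ ·)).length := by omega
  rw [List.getD_eq_getElem _ _ hk', List.getD_eq_getElem _ _ hl']
  exact (Finset.sortedLT_sort s).getElem_lt_getElem_iff.mpr hkl

lemma sorted_le_of_counts {s t : Finset ℤ} {r : ℕ} (hs : s.card = r) (ht : t.card = r)
    (h : ∀ z, (t.filter (fun x => x < z)).card ≤ (s.filter (fun x => x < z)).card)
    {j : ℕ} (hj : j < r) :
    (s.sort (· ≤ ·)).getD j 0 ≤ (t.sort (· ≤ ·)).getD j 0 := by
  classical
  by_contra hcon
  push_neg at hcon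
  set z := (s.sort (· ≤ ·)).getD j 0 with hz
  have hlow : j + 1 ≤ (t.filter (fun x => x < z)).card := by
    have h1 : (Finset.range (j + 1)).card ≤ (t.filter (fun x => x < z)).card := by
      apply Finset.card_le_card_of_injOn (fun k => (t.sort (· ≤ ·)).getD k 0)
      · intro k hk
        rw [Finset.mem_coe, Finset.mem_range] at hk
        rw [Finset.mem_coe, Finset.mem_filter]
        refine ⟨sort_getD_mem (by omega), ?_⟩
        rcases eq_or_lt_of_le (Nat.le_of_lt_succ hk) with rfl | hlt
        · exact hcon
        · exact lt_trans (sort_getD_lt hlt (by omega)) hcon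
      · intro x hx y hy hxy
        simp only [Finset.coe_range, Set.mem_Iio] at hx hy
        have hxy' : (t.sort (· ≤ ·)).getD x 0 = (t.sort (· ≤ ·)).getD y 0 := hxy
        by_contra hne
        rcases lt_or_gt_of_ne hne with hlt | hlt
        · exact ne_of_lt (sort_getD_lt (s := t) hlt (by omega)) hxy'
        · exact ne_of_lt (sort_getD_lt (s := t) hlt (by omega)) hxy'.symm
    simpa using h1
  have hupp : (s.filter (fun x => x < z)).card ≤ j := by
    have h1 : (s.filter (fun x => x < z)).card ≤ (Finset.range j).card := by
      apply Finset.card_le_card_of_injOn (fun x => (s.sort (· ≤ ·)).idxOf x)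
      · intro x hx
        rw [Finset.mem_coe, Finset.mem_filter] at hx
        have hxa : x ∈ s.sort (· ≤ ·) := (Finset.mem_sort _).mpr hx.1
        have hidx : (s.sort (· ≤ ·)).idxOf x < (s.sort (· ≤ ·)).length :=
          List.idxOf_lt_length_iff.mpr hxa
        have hlen : (s.sort (· ≤ ·)).length = r := by rw [Finset.length_sort, hs]
        rw [Finset.mem_coe, Finset.mem_range]
        by_contra hge
        push_neg at hge
        have hle : z ≤ (s.sort (· ≤ ·)).getD ((s.sort (· ≤ ·)).idxOf x) 0 := by
          rcases eq_or_lt_of_le hge with heq | hlt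
          · rw [hz, ← heq]
          · exact le_of_lt (sort_getD_lt hlt (by omega))
        rw [List.getD_eq_getElem _ _ hidx, List.getElem_idxOf hidx] at hle
        exact absurd hx.2 (not_lt.mpr hle)
      · intro x hx y hy hxy
        rw [Finset.mem_coe, Finset.mem_filter] at hx hy
        have hxa : x ∈ s.sort (· ≤ ·) := (Finset.mem_sort _).mpr hx.1
        have hya : y ∈ s.sort (· ≤ ·) := (Finset.mem_sort _).mpr hy.1
        have hidxx := List.idxOf_lt_length_iff.mpr hxa
        have hidxy := List.idxOf_lt_length_iff.mpr hya
        have hxy' : (s.sort (· ≤ ·)).idxOf x = (s.sort (· ≤ ·)).idxOf y := hxy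
        have e1 : x = (s.sort (· ≤ ·)).getD ((s.sort (· ≤ ·)).idxOf x) 0 := by
          rw [List.getD_eq_getElem _ _ hidxx, List.getElem_idxOf]
        have e2 : y = (s.sort (· ≤ ·)).getD ((s.sort (· ≤ ·)).idxOf y) 0 := by
          rw [List.getD_eq_getElem _ _ hidxy, List.getElem_idxOf]
        rw [e1, e2, hxy']
    simpa using h1
  have := h z
  omega

lemma nthVee_le_moveDiag {W : WDiag} {p q : ℤ} (hp : W.D p = Tag.vee)
    (hq : W.D q = Tag.wedge) (hpq : p < q) {j : ℕ} (hj : j < W.veeFinset.card) :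
    W.nthVee j ≤ (W.moveDiag p q).nthVee j := by
  classical
  have hcard := card_veeFinset_moveDiag hp hq
  have hps : p ∈ W.veeFinset := mem_veeFinset.mpr hp
  have hcounts : ∀ z, (((W.moveDiag p q).veeFinset).filter (fun x => x < z)).card ≤
      (W.veeFinset.filter (fun x => x < z)).card := by
    intro z
    rw [veeFinset_moveDiag hp hq]
    by_cases hqz : q < z
    · have hpz : p < z := hpq.trans hqz
      have hsub : (insert q (W.veeFinset.erase p)).filter (fun x => x < z) ⊆
          insert q ((W.veeFinset.filter (fun x => x < z)).erase p) := by
        intro x hx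
        rw [Finset.mem_filter, Finset.mem_insert, Finset.mem_erase] at hx
        rw [Finset.mem_insert, Finset.mem_erase, Finset.mem_filter]
        rcases hx.1 with rfl | ⟨hxp, hxs⟩
        · exact Or.inl rfl
        · exact Or.inr ⟨hxp, hxs, hx.2⟩
      calc ((insert q (W.veeFinset.erase p)).filter (fun x => x < z)).card
          ≤ (insert q ((W.veeFinset.filter (fun x => x < z)).erase p)).card :=
            Finset.card_le_card hsub
        _ ≤ ((W.veeFinset.filter (fun x => x < z)).erase p).card + 1 :=
            Finset.card_insert_le _ _
        _ = (W.veeFinset.filter (fun x => x < z)).card := by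
            have hpf : p ∈ W.veeFinset.filter (fun x => x < z) :=
              (Finset.mem_filter (s := W.veeFinset) (p := fun x => x < z)).mpr ⟨hps, hpz⟩
            rw [Finset.card_erase_of_mem hpf]
            have : 0 < (W.veeFinset.filter (fun x => x < z)).card :=
              Finset.card_pos.mpr ⟨p, hpf⟩
            omega
    · apply Finset.card_le_card
      intro x hx
      rw [Finset.mem_filter, Finset.mem_insert, Finset.mem_erase] at hx
      rw [Finset.mem_filter]
      rcases hx.1 with rfl | ⟨-, hxs⟩
      · exact absurd hx.2 hqz
      · exact ⟨hxs, hx.2⟩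
  exact sorted_le_of_counts rfl hcard hcounts hj

/-! ### Move- and path-level facts -/

lemma sameTypical_refl (W : WDiag) : SameTypical W W := fun _ => ⟨Iff.rfl, Iff.rfl⟩

lemma sameTypical_symm {W W' : WDiag} (h : SameTypical W W') : SameTypical W' W :=
  fun t => ⟨(h t).1.symm, (h t).2.symm⟩

lemma sameTypical_trans {W W' W'' : WDiag} (h : SameTypical W W')
    (h' : SameTypical W' W'') : SameTypical W W'' :=
  fun t => ⟨(h t).1.trans (h' t).1, (h t).2.trans (h' t).2⟩

lemma sameTypical_typ_iff {W W' : WDiag} (h : SameTypical W W') (t : ℤ) :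
    typ W t ↔ typ W' t :=
  or_congr (h t).1 (h t).2

lemma rmove_unique {i : ℕ} {W E E' : WDiag} (h : RMove i W E) (h' : RMove i W E') :
    E = E' := by
  obtain ⟨-, q, hc, rfl⟩ := h
  obtain ⟨-, q', hc', rfl⟩ := h'
  rw [cap_unique hc hc']

lemma rmove_card {i : ℕ} {W W' : WDiag} (h : RMove i W W') :
    W'.veeFinset.card = W.veeFinset.card := by
  obtain ⟨hi, q, hc, rfl⟩ := h
  exact card_veeFinset_moveDiag hc.1 hc.2.1

lemma rmove_sameTypical {i : ℕ} {W W' : WDiag} (h : RMove i W W') :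
    SameTypical W W' := by
  obtain ⟨hi, q, hc, rfl⟩ := h
  exact sameTypical_moveDiag hc.1 hc.2.1

lemma rmove_phi {i : ℕ} {W W' : WDiag} (h : RMove i W W') :
    ∃ c : ℕ, phi W' = phi W + 1 + 2 * (c : ℤ) := by
  obtain ⟨hi, q, hc, rfl⟩ := h
  exact ⟨_, phi_moveDiag hc⟩

lemma rmove_nthVee_le {i : ℕ} {W W' : WDiag} (h : RMove i W W') {j : ℕ}
    (hj : j < W.veeFinset.card) : W.nthVee j ≤ W'.nthVee j := by
  obtain ⟨hi, q, hc, rfl⟩ := h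
  exact nthVee_le_moveDiag hc.1 hc.2.1 hc.2.2.1 hj

lemma pathRel_card {Wlam : WDiag} : ∀ (l : List ℕ) (W : WDiag), PathRel l W Wlam →
    Wlam.veeFinset.card = W.veeFinset.card := by
  intro l
  induction l with
  | nil => intro W h; rw [show W = Wlam from h]
  | cons i t ih =>
    intro W h
    obtain ⟨E, hm, hp⟩ := h
    rw [ih E hp, rmove_card hm]

lemma pathRel_sameTypical {Wlam : WDiag} : ∀ (l : List ℕ) (W : WDiag),
    PathRel l W Wlam → SameTypical W Wlam := by
  intro l
  induction l with
  | nil => intro W h; rw [show W = Wlam from h]; exact sameTypical_refl _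
  | cons i t ih =>
    intro W h
    obtain ⟨E, hm, hp⟩ := h
    exact sameTypical_trans (rmove_sameTypical hm) (ih E hp)

lemma pathRel_phi_le {Wlam : WDiag} : ∀ (l : List ℕ) (W : WDiag),
    PathRel l W Wlam → phi W + l.length ≤ phi Wlam := by
  intro l
  induction l with
  | nil => intro W h; rw [show W = Wlam from h]; simp
  | cons i t ih =>
    intro W h
    obtain ⟨E, hm, hp⟩ := h
    obtain ⟨c, hc⟩ := rmove_phi hm
    have := ih E hp
    simp only [List.length_cons]
    push_cast
    push_cast at this
    omega

lemma pathRel_nthVee_le {Wlam : WDiag} : ∀ (l : List ℕ) (W : WDiag),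
    PathRel l W Wlam → ∀ j, j < W.veeFinset.card → W.nthVee j ≤ Wlam.nthVee j := by
  intro l
  induction l with
  | nil => intro W h j hj; rw [show W = Wlam from h]
  | cons i t ih =>
    intro W h j hj
    obtain ⟨E, hm, hp⟩ := h
    refine le_trans (rmove_nthVee_le hm hj) (ih E hp j ?_)
    rw [rmove_card hm]; exact hj

lemma lpathRel_pathRel {r : ℕ} : ∀ (l : List ℕ) (S S' : WDiag × (Fin r → ℤ)),
    LPathRel r l S S' → PathRel l S.1 S'.1 := by
  intro l
  induction l with
  | nil => intro S S' h; rw [show S = S' from h]; exact rfl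
  | cons i t ih =>
    intro S S' h
    obtain ⟨E, hm, hp⟩ := h
    obtain ⟨k, q, hk, hi, hcap, hE1, hE2⟩ := hm
    refine ⟨E.1, ⟨hi, q, ?_, ?_⟩, ih E S' hp⟩
    · rw [← hk]; exact hcap
    · rw [hE1, hk]

/-- An equality criterion for diagrams. -/
lemma eq_of_veeFinset_eq_sameTypical {W W' : WDiag} (hv : W.veeFinset = W'.veeFinset)
    (ht : SameTypical W W') : W = W' := by
  apply wdiag_ext
  intro t
  rcases tag_cases W t with h | h | h
  · rw [h, eq_comm, ← mem_veeFinset, ← hv, mem_veeFinset]; exact h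
  · rcases tag_cases W' t with h' | h' | h'
    · exfalso
      rw [← mem_veeFinset, ← hv, mem_veeFinset, h] at h'
      exact Tag.noConfusion h'
    · rw [h, h']
    · exfalso
      rcases (sameTypical_typ_iff ht t).mpr h' with h'' | h'' <;>
        rw [h] at h'' <;> exact Tag.noConfusion h''
  · rcases h with h | h
    · rw [h, ((ht t).1.mp h)]
    · rw [h, ((ht t).2.mp h)]

/-! ### The greedy (trivial) path -/

lemma greedy {Wlam : WDiag} {r : ℕ} (hlam : Wlam.veeFinset.card = r) :
    ∀ (n : ℕ) (W : WDiag), W.veeFinset.card = r → SameTypical W Wlam →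
    (∀ j, j < r → W.nthVee j ≤ Wlam.nthVee j) →
    (∑ j ∈ Finset.range r, (Wlam.nthVee j - W.nthVee j).toNat) = n →
    ∃ l : List ℕ,
      l.Chain' (fun a b => b ≤ a) ∧
      LPathRel r l (W, fun k => W.nthVee k) (Wlam, fun k => Wlam.nthVee k) ∧
      phi W + l.length = phi Wlam ∧
      (∀ j ∈ l, j < r ∧ W.nthVee j < Wlam.nthVee j) := by
  intro n
  induction n using Nat.strong_induction_on with
  | _ n ih =>
  intro W hr hst hdom hsum
  by_cases hEq : ∀ j, j < r → W.nthVee j = Wlam.nthVee j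
  · -- W = Wlam, empty path
    have hveq : W.veeFinset = Wlam.veeFinset := by
      have h1 := sort_eq_ofFn_nthVee W hr
      have h2 := sort_eq_ofFn_nthVee Wlam hlam
      have h3 : (fun i : Fin r => W.nthVee i) = (fun i : Fin r => Wlam.nthVee i) := by
        funext i; exact hEq i i.isLt
      rw [← Finset.sort_toFinset W.veeFinset (· ≤ ·),
        ← Finset.sort_toFinset Wlam.veeFinset (· ≤ ·), h1, h2, h3]
    have hW : W = Wlam := eq_of_veeFinset_eq_sameTypical hveq hst
    subst hW
    exact ⟨[], List.IsChain.nil, rfl, by simp, by simp⟩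
  · push_neg at hEq
    -- the maximal index that still must move
    set J := (Finset.range r).filter (fun j => W.nthVee j < Wlam.nthVee j) with hJ
    have hJne : J.Nonempty := by
      obtain ⟨j, hjr, hjne⟩ := hEq
      exact ⟨j, by
        rw [hJ, Finset.mem_filter, Finset.mem_range]
        exact ⟨hjr, lt_of_le_of_ne (hdom j hjr) hjne⟩⟩
    set i := J.max' hJne with hidef
    have hiJ : i ∈ J := J.max'_mem hJne
    rw [hJ, Finset.mem_filter, Finset.mem_range] at hiJ
    obtain ⟨hir, hilt⟩ := hiJ
    have himax : ∀ j, j < r → W.nthVee j < Wlam.nthVee j → j ≤ i := by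
      intro j hjr hjlt
      exact J.le_max' j (by rw [hJ, Finset.mem_filter, Finset.mem_range]; exact ⟨hjr, hjlt⟩)
    have hfix : ∀ j, i < j → j < r → W.nthVee j = Wlam.nthVee j := by
      intro j h1 h2
      rcases eq_or_lt_of_le (hdom j h2) with h | h
      · exact h
      · exact absurd (himax j h2 h) (by omega)
    -- the first non-typical position after the i-th vee
    set T := (Finset.Ioc (W.nthVee i) (Wlam.nthVee i)).filter (fun t => ¬ typ W t)
      with hT
    have hyT : Wlam.nthVee i ∈ T := by
      rw [hT, Finset.mem_filter, Finset.mem_Ioc]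
      refine ⟨⟨hilt, le_rfl⟩, ?_⟩
      rw [sameTypical_typ_iff hst]
      intro htyp
      have := nthVee_vee (W := Wlam) (i := i) (by omega)
      rcases htyp with h | h <;> rw [this] at h <;> exact Tag.noConfusion h
    have hTne : T.Nonempty := ⟨_, hyT⟩
    set w := T.min' hTne with hwdef
    have hwT : w ∈ T := T.min'_mem hTne
    rw [hT, Finset.mem_filter, Finset.mem_Ioc] at hwT
    obtain ⟨⟨hpw, hwy⟩, hwnt⟩ := hwT
    have hmin : ∀ t, W.nthVee i < t → t < w → typ W t := by
      intro t h1 h2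
      by_contra htyp
      have : t ∈ T := by
        rw [hT, Finset.mem_filter, Finset.mem_Ioc]
        exact ⟨⟨h1, le_trans h2.le hwy⟩, htyp⟩
      exact absurd (T.min'_le t this) (by omega)
    have hwv : W.D w ≠ Tag.vee := by
      intro hv
      obtain ⟨a, har, hav⟩ := exists_nthVee_eq (mem_veeFinset.mpr hv)
      have hia : i < a := by
        rcases lt_trichotomy a i with h | h | h
        · exact absurd hav (ne_of_lt (by
            calc W.nthVee a < W.nthVee i := nthVee_strictMono h (by omega)
              _ < w := hpw))
        · subst h; exact absurd hav (ne_of_lt hpw)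
        · exact h
      have hfa := hfix a hia (by omega)
      have : Wlam.nthVee i < Wlam.nthVee a :=
        nthVee_strictMono (W := Wlam) hia (by omega)
      omega
    have hww : W.D w = Tag.wedge := by
      rcases tag_cases W w with h | h | h
      · exact absurd h hwv
      · exact h
      · exact absurd h hwnt
    have hcap : W.IsCap (W.nthVee i) w := by
      refine ⟨nthVee_vee (by omega), hww, hpw, ?_, ?_⟩
      · rw [capBal]
        have hv : (Finset.Ioo (W.nthVee i) w).filter (fun t => W.D t = Tag.vee) = ∅ := by
          rw [Finset.eq_empty_iff_forall_notMem]
          intro t ht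
          rw [Finset.mem_filter, Finset.mem_Ioo] at ht
          rcases hmin t ht.1.1 ht.1.2 with h | h <;> rw [ht.2] at h <;>
            exact Tag.noConfusion h
        have hw : (Finset.Ioo (W.nthVee i) w).filter (fun t => W.D t = Tag.wedge) = ∅ := by
          rw [Finset.eq_empty_iff_forall_notMem]
          intro t ht
          rw [Finset.mem_filter, Finset.mem_Ioo] at ht
          rcases hmin t ht.1.1 ht.1.2 with h | h <;> rw [ht.2] at h <;>
            exact Tag.noConfusion h
        rw [hv, hw]
      · intro q' h1 h2 h3 _
        rcases hmin q' h1 h2 with h | h <;> rw [h3] at h <;> exact Tag.noConfusion h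
    have hsimple : Vcnt W (W.nthVee i) w = 0 := by
      rw [Vcnt, Finset.card_eq_zero, Finset.eq_empty_iff_forall_notMem]
      intro t ht
      rw [Finset.mem_filter, Finset.mem_Ioo] at ht
      rcases hmin t ht.1.1 ht.1.2 with h | h <;> rw [ht.2] at h <;> exact Tag.noConfusion h
    set E := W.moveDiag (W.nthVee i) w with hE
    have hmove : RMove i W E := ⟨by omega, w, hcap, rfl⟩
    have hEcard : E.veeFinset.card = r := by rw [hE, card_veeFinset_moveDiag hcap.1 hww, hr]
    have hEnth : ∀ j, j < r → E.nthVee j = if j = i then w else W.nthVee j := by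
      intro j hj
      exact nthVee_moveDiag_simple hr hir hcap hsimple hj
    have hEst : SameTypical E Wlam :=
      sameTypical_trans (sameTypical_symm (sameTypical_moveDiag hcap.1 hww)) hst
    have hEdom : ∀ j, j < r → E.nthVee j ≤ Wlam.nthVee j := by
      intro j hj
      rw [hEnth j hj]
      by_cases h : j = i
      · rw [if_pos h, h]; exact hwy
      · rw [if_neg h]; exact hdom j hj
    have hdec : (∑ j ∈ Finset.range r, (Wlam.nthVee j - E.nthVee j).toNat) < n := by
      rw [← hsum]
      apply Finset.sum_lt_sum
      · intro j hjm
        rw [Finset.mem_range] at hjm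
        have := hEnth j hjm
        by_cases h : j = i
        · rw [this, if_pos h, h]; omega
        · rw [this, if_neg h]
      · refine ⟨i, Finset.mem_range.mpr hir, ?_⟩
        rw [hEnth i hir, if_pos rfl]
        omega
    obtain ⟨l', hch', hlp', hphi', hprop'⟩ := ih _ hdec E hEcard hEst hEdom rfl
    have hl'le : ∀ j ∈ l', j ≤ i := by
      intro j hjl
      obtain ⟨hjr, hjlt⟩ := hprop' j hjl
      by_contra hgt
      push_neg at hgt
      rw [hEnth j hjr, if_neg (by omega)] at hjlt
      exact absurd (hfix j hgt hjr) (by omega)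
    refine ⟨i :: l', ?_, ?_, ?_, ?_⟩
    · show List.IsChain _ (i :: l')
      rw [List.isChain_cons]
      refine ⟨?_, hch'⟩
      intro y hy
      exact hl'le y (List.mem_of_mem_head? hy)
    · refine ⟨(E, fun k => E.nthVee k), ?_, hlp'⟩
      refine ⟨⟨i, hir⟩, w, rfl, by show i < W.veeFinset.card; omega, hcap, rfl, ?_⟩
      funext k
      rw [Function.update_apply]
      by_cases h : k = ⟨i, hir⟩
      · rw [if_pos h, h]
        show E.nthVee (i : ℕ) = w
        rw [hEnth i hir, if_pos rfl]
      · rw [if_neg h]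
        have hki : (k : ℕ) ≠ i := fun hc => h (Fin.ext hc)
        show E.nthVee (k : ℕ) = W.nthVee (k : ℕ)
        rw [hEnth k k.isLt, if_neg hki]
    · have hphiE : phi E = phi W + 1 := by
        rw [hE, phi_moveDiag hcap, hsimple]
        push_cast
        ring
      rw [List.length_cons]
      push_cast
      push_cast at hphi'
      omega
    · intro j hj
      rcases List.mem_cons.mp hj with rfl | hj'
      · exact ⟨hir, hilt⟩
      · obtain ⟨hjr, hjlt⟩ := hprop' j hj'
        refine ⟨hjr, ?_⟩
        by_cases h : j = i
        · subst h; exact hilt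
        · rw [hEnth j hjr, if_neg h] at hjlt
          exact hjlt

/-! ### Uniqueness of the maximal path -/

lemma chain'_le_of_head {i : ℕ} {l : List ℕ}
    (h : (i :: l).Chain' (fun a b => b ≤ a)) : ∀ j ∈ l, j ≤ i := by
  haveI : IsTrans ℕ (fun a b => b ≤ a) := ⟨fun a b c h1 h2 => le_trans h2 h1⟩
  have hp := List.isChain_iff_pairwise.mp h
  exact fun j hj => List.rel_of_pairwise_cons hp hj

lemma tight_step {i : ℕ} {W E Wlam : WDiag} {l : List ℕ}
    (hm : RMove i W E) (hp : PathRel l E Wlam)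
    (hphi : phi W + ((l.length : ℤ) + 1) = phi Wlam) :
    (∃ q, W.IsCap (W.nthVee i) q ∧ Vcnt W (W.nthVee i) q = 0 ∧
      E = W.moveDiag (W.nthVee i) q) ∧ phi E + (l.length : ℤ) = phi Wlam := by
  obtain ⟨hi, q, hcap, rfl⟩ := hm
  have h1 := phi_moveDiag hcap
  have h2 := pathRel_phi_le l _ hp
  have hc0 : Vcnt W (W.nthVee i) q = 0 := by omega
  refine ⟨⟨q, hcap, hc0, rfl⟩, by omega⟩

lemma tight_fixes_high {Wlam : WDiag} {r : ℕ} (hlam : Wlam.veeFinset.card = r)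
    {b : ℕ} (hbr : b < r) :
    ∀ (l : List ℕ) (W : WDiag), W.veeFinset.card = r → PathRel l W Wlam →
      phi W + (l.length : ℤ) = phi Wlam → (∀ k ∈ l, k < b) →
      W.nthVee b = Wlam.nthVee b := by
  intro l
  induction l with
  | nil => intro W _ h _ _; rw [show W = Wlam from h]
  | cons k t ih =>
    intro W hr hp hphi hlt
    obtain ⟨E, hm, hp'⟩ := hp
    have hkb : k < b := hlt k List.mem_cons_self
    obtain ⟨⟨q, hcap, hc0, hEeq⟩, hphi'⟩ := tight_step hm hp'
      (by rw [← hphi, List.length_cons]; push_cast; ring)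
    have hEcard : E.veeFinset.card = r := by rw [rmove_card hm, hr]
    have hEb : E.nthVee b = W.nthVee b := by
      rw [hEeq, nthVee_moveDiag_simple hr (by omega) hcap hc0 hbr, if_neg (by omega)]
    rw [← hEb]
    exact ih E hEcard hp' hphi' (fun k' hk' => hlt k' (List.mem_cons_of_mem _ hk'))

lemma head_max {Wlam : WDiag} {r : ℕ} (hlam : Wlam.veeFinset.card = r)
    {i : ℕ} {l : List ℕ} {W : WDiag} (hr : W.veeFinset.card = r)
    (hch : (i :: l).Chain' (fun a b => b ≤ a))
    (hp : PathRel (i :: l) W Wlam)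
    (hphi : phi W + (((i :: l).length : ℕ) : ℤ) = phi Wlam) :
    i < r ∧ W.nthVee i < Wlam.nthVee i ∧
      ∀ j, i < j → j < r → W.nthVee j = Wlam.nthVee j := by
  obtain ⟨E, hm, hp'⟩ := hp
  have hir : i < r := by have := hm.1; omega
  obtain ⟨⟨q, hcap, hc0, hEeq⟩, hphi'⟩ := tight_step hm hp'
    (by rw [← hphi, List.length_cons]; push_cast; ring)
  have hEcard : E.veeFinset.card = r := by rw [rmove_card hm, hr]
  refine ⟨hir, ?_, ?_⟩
  · have hEi : E.nthVee i = q := by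
      rw [hEeq, nthVee_moveDiag_simple hr hir hcap hc0 hir, if_pos rfl]
    have h1 : W.nthVee i < q := hcap.2.2.1
    have h2 : E.nthVee i ≤ Wlam.nthVee i :=
      pathRel_nthVee_le l E hp' i (by omega)
    omega
  · intro j hij hjr
    have hEj : E.nthVee j = W.nthVee j := by
      rw [hEeq, nthVee_moveDiag_simple hr hir hcap hc0 hjr, if_neg (by omega)]
    rw [← hEj]
    exact tight_fixes_high hlam hjr l E hEcard hp' hphi'
      (fun k hk => lt_of_le_of_lt (chain'_le_of_head hch k hk) hij)

lemma path_unique {Wlam : WDiag} {r : ℕ} (hlam : Wlam.veeFinset.card = r) :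
    ∀ (l1 l2 : List ℕ) (W : WDiag), W.veeFinset.card = r →
      l1.Chain' (fun a b => b ≤ a) → l2.Chain' (fun a b => b ≤ a) →
      PathRel l1 W Wlam → PathRel l2 W Wlam →
      phi W + (l1.length : ℤ) = phi Wlam → phi W + (l2.length : ℤ) = phi Wlam →
      l1 = l2 := by
  intro l1
  induction l1 with
  | nil =>
    intro l2 W hr hc1 hc2 hp1 hp2 hphi1 hphi2
    cases l2 with
    | nil => rfl
    | cons j t =>
      exfalso
      obtain ⟨E, hm, hp⟩ := hp2
      obtain ⟨c, hc⟩ := rmove_phi hm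
      have hle := pathRel_phi_le t E hp
      have hWeq : W = Wlam := hp1
      subst hWeq
      rw [List.length_cons] at hphi2
      push_cast at hphi2
      omega
  | cons i t1 ih =>
    intro l2 W hr hc1 hc2 hp1 hp2 hphi1 hphi2
    cases l2 with
    | nil =>
      exfalso
      obtain ⟨E, hm, hp⟩ := hp1
      obtain ⟨c, hc⟩ := rmove_phi hm
      have hle := pathRel_phi_le t1 E hp
      have hWeq : W = Wlam := hp2
      subst hWeq
      rw [List.length_cons] at hphi1
      push_cast at hphi1
      omega
    | cons j t2 =>
      obtain ⟨h1a, h1b, h1c⟩ := head_max hlam hr hc1 hp1 hphi1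
      obtain ⟨h2a, h2b, h2c⟩ := head_max hlam hr hc2 hp2 hphi2
      have hij : i = j := by
        rcases lt_trichotomy i j with h | h | h
        · exact absurd (h1c j h h2a) (by omega)
        · exact h
        · exact absurd (h2c i h h1a) (by omega)
      subst hij
      obtain ⟨E1, hm1, hp1'⟩ := hp1
      obtain ⟨E2, hm2, hp2'⟩ := hp2
      have hE : E1 = E2 := rmove_unique hm1 hm2
      subst hE
      obtain ⟨-, hphi1'⟩ := tight_step hm1 hp1'
        (by rw [← hphi1, List.length_cons]; push_cast; ring)
      obtain ⟨-, hphi2'⟩ := tight_step hm2 hp2'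
        (by rw [← hphi2, List.length_cons]; push_cast; ring)
      have : t1 = t2 := ih t2 E1 (by rw [rmove_card hm1, hr]) hc1.tail hc2.tail
        hp1' hp2' hphi1' hphi2'
      rw [this]

end RPAux

open WDiag in
/-!
STATEMENT 8: If a right path from `Wmu` to `Wlam` exists, then there is a unique right path
of maximal length, namely the "trivial path", which moves the `i`-th `∨` of `Wmu` to the
position of the `i`-th `∨` of `Wlam` for every `i` (i.e. induces the identity permutation).
-/
theorem stmt8 (r : ℕ) (Wmu Wlam : WDiag)
    (hmu : Wmu.veeFinset.card = r) (hlam : Wlam.veeFinset.card = r)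
    (hex : ∃ l : List ℕ, WDiag.IsRightPath Wmu Wlam l) :
    ∃ l : List ℕ,
      (WDiag.IsRightPath Wmu Wlam l ∧
        (∀ l' : List ℕ, WDiag.IsRightPath Wmu Wlam l' → l'.length ≤ l.length) ∧
        WDiag.Induces r Wmu Wlam l 1) ∧
      ∀ l' : List ℕ,
        (WDiag.IsRightPath Wmu Wlam l' ∧
          ∀ l'' : List ℕ, WDiag.IsRightPath Wmu Wlam l'' → l''.length ≤ l'.length) →
        l' = l := by
  classical
  obtain ⟨lx, hchx, hpx⟩ := hex
  have hst : WDiag.SameTypical Wmu Wlam := RPAux.pathRel_sameTypical lx Wmu hpx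
  have hdom : ∀ j, j < r → Wmu.nthVee j ≤ Wlam.nthVee j := by
    intro j hj
    exact RPAux.pathRel_nthVee_le lx Wmu hpx j (by omega)
  obtain ⟨l₀, hch₀, hlp₀, hphi₀, -⟩ := RPAux.greedy hlam _ Wmu hmu hst hdom rfl
  have hpr₀ : WDiag.PathRel l₀ Wmu Wlam := RPAux.lpathRel_pathRel l₀ _ _ hlp₀
  have hmax : ∀ l' : List ℕ, WDiag.IsRightPath Wmu Wlam l' → l'.length ≤ l₀.length := by
    rintro l' ⟨hch', hp'⟩
    have := RPAux.pathRel_phi_le l' Wmu hp'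
    omega
  refine ⟨l₀, ⟨⟨hch₀, hpr₀⟩, hmax, ?_⟩, ?_⟩
  · exact ⟨fun k => Wlam.nthVee k, hlp₀, fun k => rfl⟩
  · rintro l' ⟨⟨hch', hp'⟩, hmax'⟩
    have h1 : l₀.length ≤ l'.length := hmax' l₀ ⟨hch₀, hpr₀⟩
    have h2 : l'.length ≤ l₀.length := hmax l' ⟨hch', hp'⟩
    have hlen : l'.length = l₀.length := le_antisymm h2 h1
    exact RPAux.path_unique hlam l' l₀ Wmu hmu hch' hch₀ hp' hpr₀
      (by rw [hlen]; exact hphi₀) hphi₀
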